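/- Let X ⊂ ℝⁿ be a nonempty convex compact set with symmetrization X_s = (1/2)(X − X), A an m×n matrix, B a ν×n matrix, ‖·‖ a norm on ℝ^ν with conjugate unit ball B_* = {u ∈ ℝ^ν : ‖u‖_* ≤ 1}. Let 𝓜 : S^{ν+n} → ℝ be a function satisfying 𝓜(M) ≥ max_{u∈B_*, z∈X_s} [u;z]ᵀ M [u;z] for every symmetric (ν+n)×(ν+n) matrix M. Let H = [h₁,…,h_N] be an m×N matrix, λ ∈ ℝ^N with λ ≥ 0, Θ_λ = H Diag(λ) Hᵀ and μ_λ = Σ_ℓ λ_ℓ. Then 𝔐[H] := max{‖Bz‖ : z ∈ 2X_s, ‖HᵀAz‖_∞ ≤ 2} ≤ 2·𝓜(B₊[Θ_λ]) + 2μ_λ, where B₊[Θ] is the symmetric (ν+n)×(ν+n) matrix with zero ν×ν upper-left block, upper-right block (1/2)B, lower-left block (1/2)Bᵀ, and lower-right block −AᵀΘA. -/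

import Mathlib

open Matrix

-- dual attainment lemma
lemma dual_attain {ν : ℕ}
    (nrm : (Fin ν → ℝ) → ℝ)
    (nrm_add : ∀ u v, nrm (u + v) ≤ nrm u + nrm v)
    (nrm_smul : ∀ (c : ℝ) u, nrm (c • u) = |c| * nrm u)
    (nrm_eq_zero : ∀ u, nrm u = 0 ↔ u = 0)
    (nrmStar : (Fin ν → ℝ) → ℝ)
    (hnrmStar : ∀ u, nrmStar u = sSup ((fun y => u ⬝ᵥ y) '' {y | nrm y ≤ 1}))
    (v : Fin ν → ℝ) :
    ∃ u, nrmStar u ≤ 1 ∧ nrm v ≤ u ⬝ᵥ v := by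
  have nrm0 : nrm 0 = 0 := (nrm_eq_zero 0).mpr rfl
  have nrm_nonneg : ∀ y, 0 ≤ nrm y := by
    intro y
    have h := nrm_add y (-y)
    have : nrm (-y) = nrm y := by
      have := nrm_smul (-1) y
      simpa using this
    have h0 : nrm (y + -y) = 0 := by simpa using nrm0
    linarith [h, h0.symm ▸ h]
  -- the unit ball is nonempty
  have h0K : (0 : Fin ν → ℝ) ∈ {y | nrm y ≤ 1} := by simp [nrm0]
  have star_le_one : ∀ u : Fin ν → ℝ, (∀ y, nrm y ≤ 1 → u ⬝ᵥ y ≤ 1) → nrmStar u ≤ 1 := by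
    intro u hu
    rw [hnrmStar]
    apply Real.sSup_le
    · rintro x ⟨y, hy, rfl⟩; exact hu y hy
    · norm_num
  by_cases hv : nrm v = 0
  · refine ⟨0, star_le_one 0 (by intro y _; simp), ?_⟩
    simp [hv]
  · have hvpos : 0 < nrm v := lt_of_le_of_ne (nrm_nonneg v) (Ne.symm hv)
    -- continuity of nrm
    have sub_bound : ∀ a b : Fin ν → ℝ, nrm a - nrm b ≤ nrm (a - b) := by
      intro a b
      have := nrm_add (a - b) b
      simp at this
      linarith
    set C : ℝ := ∑ i : Fin ν, nrm (Pi.single i 1) with hC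
    have hCnn : 0 ≤ C := Finset.sum_nonneg fun i _ => nrm_nonneg _
    have nrm_le_sum : ∀ y : Fin ν → ℝ, nrm y ≤ ∑ i, |y i| * nrm (Pi.single i 1) := by
      intro y
      have hy : y = ∑ i : Fin ν, (y i) • (Pi.single i (1:ℝ) : Fin ν → ℝ) := by
        ext j
        simp [Pi.single_apply]
      calc nrm y = nrm (∑ i : Fin ν, (y i) • (Pi.single i (1:ℝ) : Fin ν → ℝ)) := by rw [← hy]
        _ ≤ ∑ i : Fin ν, nrm ((y i) • (Pi.single i (1:ℝ) : Fin ν → ℝ)) := by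
            classical
            exact Finset.le_sum_of_subadditive nrm nrm0.le nrm_add _ _
        _ = ∑ i, |y i| * nrm (Pi.single i 1) := by
            exact Finset.sum_congr rfl fun i _ => nrm_smul _ _
    have hcont : Continuous nrm := by
      apply (lipschitzWith_iff_dist_le_mul (K := C.toNNReal)).mpr ?_ |>.continuous
      intro a b
      rw [Real.coe_toNNReal _ hCnn, Real.dist_eq, abs_sub_le_iff]
      have key : ∀ p q : Fin ν → ℝ, nrm (p - q) ≤ C * dist p q := by
        intro p q
        calc nrm (p - q) ≤ ∑ i, |(p - q) i| * nrm (Pi.single i 1) := nrm_le_sum _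
          _ ≤ ∑ i, dist p q * nrm (Pi.single i 1) := by
              refine Finset.sum_le_sum fun i _ => ?_
              have h1 : |(p - q) i| ≤ dist p q := by
                have := dist_le_pi_dist p q i
                rwa [Real.dist_eq] at this
              exact mul_le_mul_of_nonneg_right h1 (nrm_nonneg _)
          _ = C * dist p q := by rw [← Finset.mul_sum, mul_comm]
      exact ⟨le_trans (sub_bound a b) (key a b),
        le_trans (sub_bound b a) (by simpa [dist_comm] using key b a)⟩
    -- separation
    set p : Fin ν → ℝ := (nrm v)⁻¹ • v with hp
    have hnp : nrm p = 1 := by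
      rw [hp, nrm_smul, abs_of_pos (inv_pos.mpr hvpos), inv_mul_cancel₀ hv]
    set S : Set (Fin ν → ℝ) := {y | nrm y < 1} with hS
    have hSopen : IsOpen S := isOpen_lt hcont continuous_const
    have hSconv : Convex ℝ S := by
      intro a ha b hb ta tb hta htb hsum
      simp only [hS, Set.mem_setOf_eq] at ha hb ⊢
      have h1 : nrm (ta • a + tb • b) ≤ ta * nrm a + tb * nrm b := by
        refine le_trans (nrm_add _ _) ?_
        rw [nrm_smul, nrm_smul, abs_of_nonneg hta, abs_of_nonneg htb]
      rcases eq_or_lt_of_le hta with h|h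
      · have htb1 : tb = 1 := by linarith
        calc nrm (ta • a + tb • b) ≤ ta * nrm a + tb * nrm b := h1
          _ < 1 := by rw [← h, htb1]; simpa using hb
      · have h2 : ta * nrm a < ta := by nlinarith
        have h3 : tb * nrm b ≤ tb := by nlinarith
        linarith
    have hpS : p ∉ S := by simp [hS, hnp]
    obtain ⟨f, hf⟩ := geometric_hahn_banach_open_point hSconv hSopen hpS
    have h0S : (0 : Fin ν → ℝ) ∈ S := by simp [hS, nrm0]
    have hc : 0 < f p := by have := hf 0 h0S; simpa using this
    set u : Fin ν → ℝ := fun i => (f p)⁻¹ * f (Pi.single i 1) with hu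
    have hud : ∀ y : Fin ν → ℝ, u ⬝ᵥ y = (f p)⁻¹ * f y := by
      intro y
      have hy : y = ∑ i : Fin ν, (y i) • (Pi.single i (1:ℝ) : Fin ν → ℝ) := by
        ext j
        simp [Pi.single_apply]
      have hfy : f y = ∑ i : Fin ν, y i * f (Pi.single i 1) := by
        conv_lhs => rw [hy]
        rw [map_sum]
        exact Finset.sum_congr rfl fun i _ => by rw [f.map_smul]; rfl
      rw [hfy, dotProduct, Finset.mul_sum]
      exact Finset.sum_congr rfl fun i _ => by rw [hu]; ring
    have hfle : ∀ y, nrm y ≤ 1 → f y ≤ f p := by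
      intro y hy
      by_contra hgt
      push_neg at hgt
      have hfy : 0 < f y := lt_trans hc hgt
      set t : ℝ := (f p / f y + 1) / 2 with htdef
      have hq : 0 < f p / f y := by positivity
      have hq1 : f p / f y < 1 := (div_lt_one hfy).mpr hgt
      have ht0 : 0 < t := by positivity
      have ht1 : t < 1 := by rw [htdef]; linarith
      have htS : t • y ∈ S := by
        simp only [hS, Set.mem_setOf_eq]
        rw [nrm_smul, abs_of_pos ht0]
        nlinarith [nrm_nonneg y]
      have h2 := hf (t • y) htS
      rw [f.map_smul, smul_eq_mul] at h2
      have h3 : f p / f y * f y = f p := div_mul_cancel₀ _ (ne_of_gt hfy)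
      rw [htdef] at h2
      nlinarith [h2, h3]
    refine ⟨u, star_le_one u ?_, ?_⟩
    · intro y hy
      rw [hud]
      have := hfle y hy
      rw [inv_mul_le_iff₀ hc, mul_one]
      exact this
    · have hfv : f v = nrm v * f p := by
        have hv' : v = nrm v • p := by
          rw [hp, smul_smul, mul_inv_cancel₀ hv, one_smul]
        conv_lhs => rw [hv']
        rw [f.map_smul, smul_eq_mul]
      rw [hud, hfv, mul_comm (nrm v) (f p), ← mul_assoc,
        inv_mul_cancel₀ (ne_of_gt hc), one_mul]




/-- aggregation bound. If `𝓜` upper-bounds quadratic forms over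
`B_* × X_s` (with `B_*` the unit ball of the conjugate norm), then for any contrast
matrix `H` and `λ ≥ 0`, with `Θ_λ = H Diag(λ) Hᵀ`, `μ_λ = Σ λ_ℓ`,
`𝔐[H] = max{‖Bz‖ : z ∈ 2X_s, ‖HᵀAz‖_∞ ≤ 2} ≤ 2𝓜(B₊[Θ_λ]) + 2μ_λ`. -/
theorem stmt5
    {n m ν N : ℕ}
    (X : Set (Fin n → ℝ)) (hXne : X.Nonempty) (hXconv : Convex ℝ X) (hXcomp : IsCompact X)
    (A : Matrix (Fin m) (Fin n) ℝ) (B : Matrix (Fin ν) (Fin n) ℝ)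
    (nrm : (Fin ν → ℝ) → ℝ)
    (nrm_add : ∀ u v, nrm (u + v) ≤ nrm u + nrm v)
    (nrm_smul : ∀ (c : ℝ) u, nrm (c • u) = |c| * nrm u)
    (nrm_eq_zero : ∀ u, nrm u = 0 ↔ u = 0)
    -- dual norm of `nrm`
    (nrmStar : (Fin ν → ℝ) → ℝ)
    (hnrmStar : ∀ u, nrmStar u = sSup ((fun y => u ⬝ᵥ y) '' {y | nrm y ≤ 1}))
    (𝓜 : Matrix (Fin ν ⊕ Fin n) (Fin ν ⊕ Fin n) ℝ → ℝ)
    (h𝓜 : ∀ M : Matrix (Fin ν ⊕ Fin n) (Fin ν ⊕ Fin n) ℝ, M.IsSymm →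
      ∀ u : Fin ν → ℝ, nrmStar u ≤ 1 → ∀ x ∈ X, ∀ y ∈ X,
        Sum.elim u ((2⁻¹ : ℝ) • (x - y)) ⬝ᵥ
            M.mulVec (Sum.elim u ((2⁻¹ : ℝ) • (x - y))) ≤ 𝓜 M)
    (H : Matrix (Fin m) (Fin N) ℝ) (lam : Fin N → ℝ) (hlam : ∀ ℓ, 0 ≤ lam ℓ) :
    ∀ x ∈ X, ∀ y ∈ X,
      ‖Hᵀ.mulVec (A.mulVec (x - y))‖ ≤ 2 →
      nrm (B.mulVec (x - y)) ≤
        2 * 𝓜 (Matrix.fromBlocks 0 ((2⁻¹ : ℝ) • B) ((2⁻¹ : ℝ) • Bᵀ)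
            (-(Aᵀ * (H * Matrix.diagonal lam * Hᵀ) * A)))
          + 2 * ∑ ℓ, lam ℓ := by
  intro x hx y hy hHz
  set z : Fin n → ℝ := x - y with hz
  set w : Fin n → ℝ := (2⁻¹ : ℝ) • (x - y) with hw
  set Θ : Matrix (Fin m) (Fin m) ℝ := H * Matrix.diagonal lam * Hᵀ with hΘ
  set M : Matrix (Fin ν ⊕ Fin n) (Fin ν ⊕ Fin n) ℝ :=
    Matrix.fromBlocks 0 ((2⁻¹ : ℝ) • B) ((2⁻¹ : ℝ) • Bᵀ) (-(Aᵀ * Θ * A)) with hM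
  have hΘsymm : Θᵀ = Θ := by
    rw [hΘ]
    simp [Matrix.transpose_mul, Matrix.mul_assoc]
  have hMsymm : M.IsSymm := by
    rw [Matrix.IsSymm, hM]
    simp [Matrix.fromBlocks_transpose, Matrix.transpose_mul, hΘsymm, Matrix.mul_assoc]
  set v : Fin ν → ℝ := B.mulVec z with hv
  obtain ⟨u, huStar, huv⟩ := dual_attain nrm nrm_add nrm_smul nrm_eq_zero nrmStar hnrmStar v
  have hQ := h𝓜 M hMsymm u huStar x hx y hy
  rw [← hw] at hQ
  -- compute the quadratic form
  set g : Fin N → ℝ := Hᵀ.mulVec (A.mulVec w) with hg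
  set s : ℝ := g ⬝ᵥ (Matrix.diagonal lam).mulVec g with hs
  have hBw : B.mulVec w = (2⁻¹ : ℝ) • v := by
    rw [hw, hv, hz, Matrix.mulVec_smul]
  have hform : Sum.elim u w ⬝ᵥ M.mulVec (Sum.elim u w) = 2⁻¹ * (u ⬝ᵥ v) - s := by
    rw [hM, Matrix.fromBlocks_mulVec]
    simp only [Sum.elim_comp_inl, Sum.elim_comp_inr]
    rw [sumElim_dotProduct_sumElim]
    have e1 : u ⬝ᵥ ((0 : Matrix (Fin ν) (Fin ν) ℝ).mulVec u + ((2⁻¹:ℝ) • B).mulVec w)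
        = 4⁻¹ * (u ⬝ᵥ v) := by
      rw [Matrix.zero_mulVec, zero_add, Matrix.smul_mulVec, hBw, dotProduct_smul,
        dotProduct_smul]
      simp [smul_eq_mul]; ring
    have e2 : w ⬝ᵥ (((2⁻¹:ℝ) • Bᵀ).mulVec u + (-(Aᵀ * Θ * A)).mulVec w)
        = 4⁻¹ * (u ⬝ᵥ v) - s := by
      rw [dotProduct_add]
      have e21 : w ⬝ᵥ ((2⁻¹:ℝ) • Bᵀ).mulVec u = 4⁻¹ * (u ⬝ᵥ v) := by
        rw [Matrix.smul_mulVec, dotProduct_smul, Matrix.mulVec_transpose,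
          dotProduct_comm, ← Matrix.dotProduct_mulVec, hBw, dotProduct_smul]
        simp [smul_eq_mul]; ring
      have e22 : w ⬝ᵥ (-(Aᵀ * Θ * A)).mulVec w = -s := by
        rw [Matrix.neg_mulVec, dotProduct_neg, neg_inj, hs]
        rw [← Matrix.mulVec_mulVec, ← Matrix.mulVec_mulVec,
          Matrix.dotProduct_mulVec w Aᵀ, Matrix.vecMul_transpose, hΘ,
          ← Matrix.mulVec_mulVec, ← Matrix.mulVec_mulVec,
          Matrix.dotProduct_mulVec _ H, ← Matrix.mulVec_transpose, ← hg]
      rw [e21, e22]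
      ring
    rw [e1, e2]; ring
  -- bound s
  have hgl : ∀ ℓ, |g ℓ| ≤ 1 := by
    intro ℓ
    have h1 : g = (2⁻¹ : ℝ) • (Hᵀ.mulVec (A.mulVec z)) := by
      rw [hg, hw, hz, Matrix.mulVec_smul, Matrix.mulVec_smul]
    have h2 : |(Hᵀ.mulVec (A.mulVec z)) ℓ| ≤ 2 := by
      refine le_trans ?_ hHz
      rw [← Real.norm_eq_abs]
      exact norm_le_pi_norm _ ℓ
    rw [h1]
    simp only [Pi.smul_apply, smul_eq_mul, abs_mul]
    rw [abs_of_pos (by norm_num : (0:ℝ) < 2⁻¹)]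
    linarith
  have hsle : s ≤ ∑ ℓ, lam ℓ := by
    rw [hs, dotProduct]
    refine Finset.sum_le_sum fun ℓ _ => ?_
    rw [Matrix.mulVec_diagonal]
    have h1 : g ℓ * g ℓ ≤ 1 := by
      have h2 := abs_mul_abs_self (g ℓ)
      nlinarith [hgl ℓ, abs_nonneg (g ℓ)]
    nlinarith [mul_nonneg (hlam ℓ) (sub_nonneg.mpr h1)]
  rw [hform] at hQ
  have hnv : nrm (B.mulVec (x - y)) = nrm v := by rw [hv, hz]
  rw [hnv]
  have : 𝓜 M = 𝓜 (Matrix.fromBlocks 0 ((2⁻¹ : ℝ) • B) ((2⁻¹ : ℝ) • Bᵀ)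
      (-(Aᵀ * (H * Matrix.diagonal lam * Hᵀ) * A))) := by rw [hM, hΘ]
  rw [← this]
  linarith
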